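/- arXiv:2107.10551 — 7 statements merged into one kernel-verified Lean document; each statement's English description precedes it below -/
import Mathlib

section
/- For x ∈ F_2^n, define P(x) = |x|/4 ∈ ℝ/ℤ where |x| = Σᵢ|xᵢ|. Then for all h, h' ∈ F_2^n and all x ∈ F_2^n, the second additive derivative Δ_{h'}Δ_h P(x) equals -|h'∘h|/2 mod 1, where ∘ denotes entrywise product; in particular it is independent of x. -/
/-- Additive derivative of a map `P` in direction `h`. -/
def addDeriv {G M : Type*} [Add G] [Sub M] (h : G) (P : G → M) : G → M :=
  fun x => P (x + h) - P x

lemma coord_div : ∀ a b c : ZMod 2,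
    (4:ℤ) ∣ (((a + c + b).val : ℤ) - ((a + c).val : ℤ) - ((a + b).val : ℤ) + ((a).val : ℤ)
      + 2 * (((c * b).val : ℤ))) := by
  decide

theorem stmt_2 (n : ℕ)
    (P : (Fin n → ZMod 2) → AddCircle (1 : ℝ))
    (hP : ∀ x, P x = ((((∑ i, ((x i).val : ℝ)) / 4 : ℝ)) : AddCircle (1 : ℝ)))
    (h h' x : Fin n → ZMod 2) :
    addDeriv h' (addDeriv h P) x
      = ((-((∑ i, (((h' i) * (h i)).val : ℝ)) / 2 : ℝ)) : AddCircle (1 : ℝ)) := by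
  have hdvd : (4:ℤ) ∣ ∑ i, (((x i + h' i + h i).val : ℤ) - (x i + h' i).val
      - (x i + h i).val + (x i).val + 2 * ((h' i * h i).val)) :=
    Finset.dvd_sum (fun i _ => coord_div (x i) (h i) (h' i))
  obtain ⟨m, hm⟩ := hdvd
  simp only [addDeriv, hP]
  rw [← AddCircle.coe_sub, ← AddCircle.coe_sub, ← AddCircle.coe_sub, ← sub_eq_zero,
    sub_neg_eq_add, ← AddCircle.coe_add, AddCircle.coe_eq_zero_iff]
  refine ⟨m, ?_⟩
  have := congrArg (Int.cast : ℤ → ℝ) hm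
  push_cast at this
  simp only [Finset.sum_add_distrib, Finset.sum_sub_distrib, ← Finset.mul_sum] at this
  simp only [Pi.add_apply, zsmul_eq_mul, Int.cast_id]
  linarith [this]
end

section
/- The function P : F_2^n → ℝ/ℤ given by P(x) = |x|/8 is a nonclassical polynomial of degree at most 3: for all h₁, h₂, h₃, h₄ ∈ F_2^n, the fourth additive derivative Δ_{h₄}Δ_{h₃}Δ_{h₂}Δ_{h₁}P is identically zero. -/
def g (a b1 b2 b3 b4 : ZMod 2) : ℤ :=
  (b1.val * b2.val * b3.val * b4.val : ℤ) * ((a.val:ℤ) - ((a+1).val:ℤ))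

lemma key (a b1 b2 b3 b4 : ZMod 2) :
    (((a+b1+b2+b3+b4).val:ℤ) - (a+b1+b2+b3).val - ((a+b1+b2+b4).val - (a+b1+b2).val)
     - (((a+b1+b3+b4).val - (a+b1+b3).val) - ((a+b1+b4).val - (a+b1).val))
     - ((((a+b2+b3+b4).val - (a+b2+b3).val) - ((a+b2+b4).val - (a+b2).val))
        - (((a+b3+b4).val - (a+b3).val) - ((a+b4).val - (a:ZMod 2).val))))
    = 8 * ((b1.val * b2.val * b3.val * b4.val : ℤ) * ((a.val:ℤ) - ((a+1).val:ℤ))) := by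
  revert a b1 b2 b3 b4; decide

theorem stmt_5 (n : ℕ)
    (P : (Fin n → ZMod 2) → AddCircle (1 : ℝ))
    (hP : ∀ x, P x = ((((∑ i, ((x i).val : ℝ)) / 8 : ℝ)) : AddCircle (1 : ℝ)))
    (h₁ h₂ h₃ h₄ x : Fin n → ZMod 2) :
    addDeriv h₄ (addDeriv h₃ (addDeriv h₂ (addDeriv h₁ P))) x = 0 := by
  simp only [addDeriv, hP, Finset.sum_div, ← QuotientAddGroup.mk_sub,
    ← Finset.sum_sub_distrib, Pi.add_apply]
  have key2 : (∑ i : Fin n, (((x i + h₄ i + h₃ i + h₂ i + h₁ i).val : ℝ)/8 - ((x i + h₄ i + h₃ i + h₂ i).val : ℝ)/8 - (((x i + h₄ i + h₃ i + h₁ i).val : ℝ)/8 - ((x i + h₄ i + h₃ i).val : ℝ)/8) - (((x i + h₄ i + h₂ i + h₁ i).val : ℝ)/8 - ((x i + h₄ i + h₂ i).val : ℝ)/8 - (((x i + h₄ i + h₁ i).val : ℝ)/8 - ((x i + h₄ i).val : ℝ)/8)) - (((x i + h₃ i + h₂ i + h₁ i).val : ℝ)/8 - ((x i + h₃ i + h₂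 i).val : ℝ)/8 - (((x i + h₃ i + h₁ i).val : ℝ)/8 - ((x i + h₃ i).val : ℝ)/8) - (((x i + h₂ i + h₁ i).val : ℝ)/8 - ((x i + h₂ i).val : ℝ)/8 - (((x i + h₁ i).val : ℝ)/8 - ((x i).val : ℝ)/8))))) =
      (↑(∑ i : Fin n, g (x i) (h₄ i) (h₃ i) (h₂ i) (h₁ i)) : ℝ) := by
    simp only [g]
    push_cast
    refine Finset.sum_congr rfl fun i _ => ?_
    have h8 := congrArg (Int.cast : ℤ → ℝ) (key (x i) (h₄ i) (h₃ i) (h₂ i) (h₁ i))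
    push_cast at h8
    linarith
  rw [key2]
  exact (AddCircle.coe_eq_zero_iff _).mpr
    ⟨∑ i, g (x i) (h₄ i) (h₃ i) (h₂ i) (h₁ i), by simp⟩
end

section
/- The function P : F_3^n → ℝ/ℤ given by P(x) = |x|/9 is a nonclassical polynomial of degree at most 3: for all h₁, ..., h₄ ∈ F_3^n and all x, Δ_{h₄}Δ_{h₃}Δ_{h₂}Δ_{h₁}P(x) = 0. -/
/-- Fourth alternating difference of `ZMod.val` as an integer. -/
def F4 (a b c d e : ZMod 3) : ℤ :=
  ((a+b+c+d+e).val : ℤ)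
  - (a+b+c+d).val - (a+b+c+e).val - (a+b+d+e).val - (a+c+d+e).val
  + (a+b+c).val + (a+b+d).val + (a+b+e).val + (a+c+d).val + (a+c+e).val + (a+d+e).val
  - (a+b).val - (a+c).val - (a+d).val - (a+e).val
  + (a).val

lemma key_s6 : ∀ a b c d e : ZMod 3, (9:ℤ) ∣ F4 a b c d e := by decide

theorem stmt_6 (n : ℕ)
    (P : (Fin n → ZMod 3) → AddCircle (1 : ℝ))
    (hP : ∀ x, P x = ((((∑ i, ((x i).val : ℝ)) / 9 : ℝ)) : AddCircle (1 : ℝ)))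
    (h₁ h₂ h₃ h₄ x : Fin n → ZMod 3) :
    addDeriv h₄ (addDeriv h₃ (addDeriv h₂ (addDeriv h₁ P))) x = 0 := by
  have hdvd : (9:ℤ) ∣ ∑ i, F4 (x i) (h₄ i) (h₃ i) (h₂ i) (h₁ i) :=
    Finset.dvd_sum (fun i _ => key_s6 _ _ _ _ _)
  obtain ⟨m, hm⟩ := hdvd
  simp only [addDeriv, hP, Pi.add_apply]
  rw [← QuotientAddGroup.mk_sub, ← QuotientAddGroup.mk_sub, ← QuotientAddGroup.mk_sub,
    ← QuotientAddGroup.mk_sub, ← QuotientAddGroup.mk_sub, ← QuotientAddGroup.mk_sub,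
    ← QuotientAddGroup.mk_sub, ← QuotientAddGroup.mk_sub, ← QuotientAddGroup.mk_sub,
    ← QuotientAddGroup.mk_sub, ← QuotientAddGroup.mk_sub, ← QuotientAddGroup.mk_sub,
    ← QuotientAddGroup.mk_sub, ← QuotientAddGroup.mk_sub, ← QuotientAddGroup.mk_sub]
  rw [AddCircle.coe_eq_zero_iff]
  refine ⟨m, ?_⟩
  have hT : ((∑ i, F4 (x i) (h₄ i) (h₃ i) (h₂ i) (h₁ i) : ℤ) : ℝ)
      = ∑ i, (F4 (x i) (h₄ i) (h₃ i) (h₂ i) (h₁ i) : ℝ) := by push_cast; ring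
  have key2 : (∑ i, (F4 (x i) (h₄ i) (h₃ i) (h₂ i) (h₁ i) : ℝ)) = 9 * m := by
    rw [← hT, hm]; push_cast; ring
  simp only [F4] at key2
  push_cast at key2
  simp only [Finset.sum_add_distrib, Finset.sum_sub_distrib] at key2
  rw [zsmul_eq_mul, mul_one]
  linear_combination -key2 / 9
end

section
/- Let p be a prime and P : F_p^n → ℝ/ℤ a nonclassical polynomial of degree at most 1 (i.e., all second additive derivatives vanish). Then there exists a constant α ∈ ℝ/ℤ and a classical linear function, i.e. there exist c ∈ F_p^n, such that P(x) = α + |⟨c,x⟩|/p (mod 1) for all x, where ⟨c,x⟩ is the standard inner product in F_p and |·| is the natural lift to {0,...,p-1}. -/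
private lemma frac_eq {p : ℕ} (hp : p ≠ 0) {A B : ℤ} (h : ((A : ZMod p) = (B : ZMod p))) :
    (((A : ℝ)/p : ℝ) : AddCircle (1:ℝ)) = (((B : ℝ)/p : ℝ) : AddCircle (1:ℝ)) := by
  have hd : (p : ℤ) ∣ A - B := by
    have h0 : ((A - B : ℤ) : ZMod p) = 0 := by push_cast; rw [h]; ring
    exact (ZMod.intCast_zmod_eq_zero_iff_dvd _ _).mp h0
  obtain ⟨k, hk⟩ := hd
  have hpR : (p:ℝ) ≠ 0 := Nat.cast_ne_zero.mpr hp
  have hR : (A:ℝ) - B = p * k := by exact_mod_cast congrArg (Int.cast : ℤ → ℝ) hk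
  rw [QuotientAddGroup.eq]
  refine AddSubgroup.mem_zmultiples_iff.mpr ⟨-k, ?_⟩
  simp only [zsmul_eq_mul, mul_one, neg_add_eq_sub, div_sub_div_same]
  push_cast
  rw [eq_div_iff hpR]
  linarith

theorem stmt_7 (p : ℕ) (hp : p.Prime) (n : ℕ)
    (P : (Fin n → ZMod p) → AddCircle (1 : ℝ))
    (hdeg : ∀ h₁ h₂ x, addDeriv h₂ (addDeriv h₁ P) x = 0) :
    ∃ (α : AddCircle (1 : ℝ)) (c : Fin n → ZMod p),
      ∀ x, P x = α + ((((∑ i, c i * x i).val : ℝ) / p : ℝ) : AddCircle (1 : ℝ)) := by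
  classical
  have hp0 : p ≠ 0 := hp.ne_zero
  haveI : NeZero p := ⟨hp0⟩
  have hpR : (p:ℝ) ≠ 0 := Nat.cast_ne_zero.mpr hp0
  have hadd : ∀ x y, P (x + y) = P x + P y - P 0 := by
    intro x y
    have h := hdeg x y 0
    simp only [addDeriv, zero_add] at h
    rw [sub_sub, sub_eq_zero] at h
    rw [add_comm x y, h]; abel
  set Q : (Fin n → ZMod p) →+ AddCircle (1:ℝ) :=
    AddMonoidHom.mk' (fun x => P x - P 0)
      (by intro x y; rw [hadd]; abel) with hQdef
  have key : ∀ v : Fin n → ZMod p, ∃ m : ℤ, Q v = (((m : ℝ)/p : ℝ) : AddCircle (1:ℝ)) := by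
    intro v
    have hv : p • v = 0 := by
      funext i
      simp [Pi.smul_apply, nsmul_eq_mul, ZMod.natCast_self]
    have hQ : p • Q v = 0 := by rw [← map_nsmul, hv, map_zero]
    obtain ⟨r, hr⟩ := QuotientAddGroup.mk_surjective (Q v)
    rw [← hr] at hQ ⊢
    have hQ' : ((p • r : ℝ) : AddCircle (1:ℝ)) = 0 := by rw [← hQ]; rfl
    obtain ⟨m, hm⟩ := (AddCircle.coe_eq_zero_iff _).mp hQ'
    refine ⟨m, ?_⟩
    have hr2 : (m:ℝ) = p * r := by
      simpa [zsmul_eq_mul, nsmul_eq_mul] using hm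
    have hreq : r = (m:ℝ)/p := by
      rw [eq_div_iff hpR]; linarith
    rw [hreq]
  choose m hm using fun i => key (Pi.single i (1 : ZMod p))
  refine ⟨P 0, fun i => ((m i : ℤ) : ZMod p), fun x => ?_⟩
  have hxrep : x = ∑ i, (x i).val • Pi.single i (1 : ZMod p) := by
    funext j
    rw [Finset.sum_apply, Finset.sum_eq_single j]
    · simp [ZMod.natCast_val, ZMod.cast_id]
    · intro i _ hij; simp [Pi.single_apply, hij.symm]
    · simp
  have hQx : Q x = ∑ i, (x i).val • Q (Pi.single i (1 : ZMod p)) := by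
    conv_lhs => rw [hxrep]
    rw [map_sum]
    exact Finset.sum_congr rfl fun i _ => map_nsmul Q _ _
  set A : ℤ := ∑ i, ((x i).val : ℤ) * m i with hA
  have hQx2 : Q x = (((A : ℝ) / p : ℝ) : AddCircle (1:ℝ)) := by
    rw [hQx]
    simp only [hm]
    have hφ : ∀ r : ℝ, ((r : AddCircle (1:ℝ))) = QuotientAddGroup.mk' (AddSubgroup.zmultiples (1:ℝ)) r := fun _ => rfl
    simp only [hφ]
    rw [show (∑ i, (x i).val • (QuotientAddGroup.mk' (AddSubgroup.zmultiples (1:ℝ)) ((m i : ℝ)/p)))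
        = QuotientAddGroup.mk' (AddSubgroup.zmultiples (1:ℝ)) (∑ i, (x i).val • ((m i : ℝ)/p)) by
      rw [map_sum]
      exact Finset.sum_congr rfl fun i _ => (map_nsmul _ _ _).symm]
    congr 1
    rw [hA]
    push_cast
    rw [Finset.sum_div]
    exact Finset.sum_congr rfl fun i _ => by push_cast [nsmul_eq_mul]; ring
  set B : ℤ := (((∑ i, ((m i : ℤ) : ZMod p) * x i).val : ℕ) : ℤ) with hB
  have hAB : (A : ZMod p) = (B : ZMod p) := by
    rw [hA, hB]
    push_cast [ZMod.natCast_val, ZMod.cast_id]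
    exact Finset.sum_congr rfl fun i _ => mul_comm _ _
  have hfrac := frac_eq hp0 hAB
  have hPx : P x = P 0 + Q x := by
    show P x = P 0 + (P x - P 0); abel
  rw [hPx, hQx2, hfrac, hB]
  push_cast
  ring_nf
end

section
/- Let P : F_2^n → ℝ/ℤ be P(x) = |x|/8. Then for every nonclassical polynomial Q : F_2^n → ℝ/ℤ of degree at most 2, |⟨e(P), e(Q)⟩|⁴ ≤ (3/4)^n. -/
open scoped BigOperators

/-- The exponential `e(t) = exp(2πit)` on `ℝ/ℤ`. -/
noncomputable def ee (t : AddCircle (1 : ℝ)) : ℂ := (AddCircle.toCircle t : ℂ)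

/-- Averaged inner product of two complex-valued functions on `F_2^n`. -/
noncomputable def avgInner (n : ℕ) (u v : (Fin n → ZMod 2) → ℂ) : ℂ :=
  (1 / (2 : ℂ) ^ n) * ∑ x : Fin n → ZMod 2, u x * (starRingEnd ℂ) (v x)


lemma ee_coe (r : ℝ) : ee ((r : ℝ) : AddCircle (1:ℝ)) = Complex.exp (2 * Real.pi * r * Complex.I) := by
  rw [ee, AddCircle.toCircle_apply_mk, Circle.coe_exp]; push_cast; ring_nf

lemma ee_add (a b : AddCircle (1:ℝ)) : ee (a+b) = ee a * ee b := by
  rw [ee, AddCircle.toCircle_add]; rfl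

lemma abs_ee (a : AddCircle (1:ℝ)) : ‖ee a‖ = 1 := by
  simp [ee, Circle.norm_coe]

lemma ee_ne_zero (a : AddCircle (1:ℝ)) : ee a ≠ 0 := by
  intro h; have := abs_ee a; rw [h] at this; simp at this

lemma conj_ee (a : AddCircle (1:ℝ)) : (starRingEnd ℂ) (ee a) = ee (-a) := by
  have h1 : ee (-a) * ee a = 1 := by rw [← ee_add]; simp [ee]
  have h2 : (starRingEnd ℂ) (ee a) * ee a = 1 := by
    rw [mul_comm, Complex.mul_conj, ← Complex.sq_norm, abs_ee]; norm_num
  exact mul_right_cancel₀ (ee_ne_zero a) (h2.trans h1.symm)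

lemma ee_sub (a b : AddCircle (1:ℝ)) : ee (a-b) = ee a * (starRingEnd ℂ) (ee b) := by
  rw [conj_ee, ← ee_add, sub_eq_add_neg]

section
variable {G : Type*} [Fintype G] [AddCommGroup G]

lemma cs_step {α : Type*} [Fintype α] (a : α → ℝ) :
    (∑ x, a x)^2 ≤ (Fintype.card α : ℝ) * ∑ x, (a x)^2 := by
  have := sq_sum_le_card_mul_sum_sq (s := (Finset.univ : Finset α)) (f := a)
  simpa using this

lemma mul_conj_sum (f : G → ℂ) :
    (∑ x, f x) * (starRingEnd ℂ) (∑ x, f x) = ∑ h, ∑ x, f (x + h) * (starRingEnd ℂ) (f x) := by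
  rw [Finset.sum_comm]
  have : ∀ x : G, ∑ h, f (x + h) * (starRingEnd ℂ) (f x) = (∑ y, f y) * (starRingEnd ℂ) (f x) := by
    intro x
    rw [← Finset.sum_mul]
    congr 1
    exact Fintype.sum_equiv (Equiv.addLeft x) _ _ (fun h => rfl)
  simp_rw [this]
  rw [← Finset.mul_sum, map_sum]

lemma u2_bound (f : G → ℂ) :
    (‖∑ x, f x‖)^4 ≤ (Fintype.card G : ℝ) *
      ∑ h, ∑ k, ‖∑ x, f (x + k + h) * (starRingEnd ℂ) (f (x + k)) *
        ((starRingEnd ℂ) (f (x + h)) * f x)‖ := by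
  set S := ∑ x, f x with hS
  set A : G → ℂ := fun h => ∑ x, f (x + h) * (starRingEnd ℂ) (f x) with hA
  have habs2 : ∀ z : ℂ, (‖z‖)^2 = ‖z * (starRingEnd ℂ) z‖ := by
    intro z; rw [norm_mul, Complex.norm_conj, sq]
  have h1 : (‖S‖)^2 = ‖∑ h, A h‖ := by
    rw [habs2, mul_conj_sum]
  have h2 : ∀ h : G, (‖A h‖)^2 ≤
      ∑ k, ‖∑ x, f (x + k + h) * (starRingEnd ℂ) (f (x + k)) *
        ((starRingEnd ℂ) (f (x + h)) * f x)‖ := by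
    intro h
    rw [habs2]
    have := mul_conj_sum (fun x => f (x + h) * (starRingEnd ℂ) (f x))
    rw [this]
    refine le_trans (norm_sum_le _ _) (le_of_eq ?_)
    refine Finset.sum_congr rfl fun k _ => congrArg (‖·‖) (Finset.sum_congr rfl fun x _ => ?_)
    rw [map_mul, Complex.conj_conj]
  calc (‖S‖)^4 = ((‖S‖)^2)^2 := by ring
    _ = (‖∑ h, A h‖)^2 := by rw [h1]
    _ ≤ (∑ h, ‖A h‖)^2 := by
        apply pow_le_pow_left₀ (norm_nonneg _) (norm_sum_le _ _)
    _ ≤ (Fintype.card G : ℝ) * ∑ h, (‖A h‖)^2 := cs_step _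
    _ ≤ _ := by
        apply mul_le_mul_of_nonneg_left _ (by positivity)
        exact Finset.sum_le_sum (fun h _ => h2 h)
end
open Complex

noncomputable def rfun (a b c : ZMod 2) : ℝ :=
  (((a+b+c).val:ℝ) - ((a+b).val:ℝ) - ((a+c).val:ℝ) + (a.val:ℝ))/8

noncomputable def wfun (b c : ZMod 2) : ℝ := if b * c = 0 then 2 else 0

lemma zmod_sum_two {M : Type*} [AddCommMonoid M] (g : ZMod 2 → M) : ∑ a, g a = g 0 + g 1 := by
  rw [show (Finset.univ : Finset (ZMod 2)) = {0, 1} from by decide,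
    Finset.sum_pair (by decide : (0:ZMod 2) ≠ 1)]

lemma factor_bound (b c : ZMod 2) :
    ‖∑ a : ZMod 2, Complex.exp (2*Real.pi*(rfun a b c)*I)‖ ≤ wfun b c := by
  rw [zmod_sum_two]
  have cases2 : ∀ a : ZMod 2, a = 0 ∨ a = 1 := by decide
  rcases cases2 b with rfl | rfl <;> rcases cases2 c with rfl | rfl
  · have h0 : rfun 0 0 0 = 0 := by simp [rfun]
    have h1 : rfun 1 0 0 = 0 := by simp [rfun]
    rw [h0, h1]; norm_num [wfun]
  · have h0 : rfun 0 0 1 = 0 := by simp [rfun]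
    have h1 : rfun 1 0 1 = 0 := by
      simp only [rfun]
      rw [show ((1:ZMod 2)+0+1) = 0 from by decide, show ((1:ZMod 2)+0) = 1 from by decide,
        show ((1:ZMod 2)+1) = 0 from by decide]
      simp
    rw [h0, h1]; norm_num [wfun]
  · have h0 : rfun 0 1 0 = 0 := by
      simp only [rfun]
      rw [show ((0:ZMod 2)+1+0) = 1 from by decide, show ((0:ZMod 2)+1) = 1 from by decide,
        show ((0:ZMod 2)+0) = 0 from by decide]
      simp
    have h1 : rfun 1 1 0 = 0 := by
      simp only [rfun]
      rw [show ((1:ZMod 2)+1+0) = 0 from by decide, show ((1:ZMod 2)+1) = 0 from by decide,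
        show ((1:ZMod 2)+0) = 1 from by decide]
      simp
    rw [h0, h1]; norm_num [wfun]
  · have h0 : rfun 0 1 1 = -(1/4) := by
      simp only [rfun]
      rw [show ((0:ZMod 2)+1+1) = 0 from by decide, show ((0:ZMod 2)+1) = 1 from by decide]
      rw [show (1:ZMod 2).val = 1 from rfl]
      norm_num
    have h1 : rfun 1 1 1 = 1/4 := by
      simp only [rfun]
      rw [show ((1:ZMod 2)+1+1) = 1 from by decide, show ((1:ZMod 2)+1) = 0 from by decide]
      rw [show (1:ZMod 2).val = 1 from rfl]
      norm_num
    rw [h0, h1]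
    have e0 : Complex.exp (2*Real.pi*((-(1/4):ℝ))*I) = -I := by
      rw [show (2*(Real.pi:ℂ)*((-(1/4):ℝ)) : ℂ) = ((-(Real.pi/2) : ℝ):ℂ) from by push_cast; ring]
      rw [Complex.exp_mul_I, ← Complex.ofReal_cos, ← Complex.ofReal_sin,
        Real.cos_neg, Real.sin_neg, Real.cos_pi_div_two, Real.sin_pi_div_two]
      simp
    have e1 : Complex.exp (2*Real.pi*((1/4:ℝ))*I) = I := by
      rw [show (2*(Real.pi:ℂ)*((1/4:ℝ)) : ℂ) = ((Real.pi/2 : ℝ):ℂ) from by push_cast; ring]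
      rw [Complex.exp_mul_I, ← Complex.ofReal_cos, ← Complex.ofReal_sin,
        Real.cos_pi_div_two, Real.sin_pi_div_two]
      simp
    rw [e0, e1]
    simp [wfun]

lemma sum_prod_factor {n : ℕ} {M : Type*} [CommSemiring M] (g : Fin n → ZMod 2 → M) :
    ∑ x : Fin n → ZMod 2, ∏ i, g i (x i) = ∏ i, ∑ a, g i a := by
  rw [Finset.prod_univ_sum]
  rw [Fintype.piFinset_univ]

lemma expsum_bound {n : ℕ} (hh k : Fin n → ZMod 2) :
    ‖∑ x : Fin n → ZMod 2,
        Complex.exp (2*Real.pi*((∑ i, rfun (x i) (k i) (hh i) : ℝ))*I)‖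
      ≤ ∏ i, wfun (k i) (hh i) := by
  have key : ∀ x : Fin n → ZMod 2,
      Complex.exp (2*Real.pi*((∑ i, rfun (x i) (k i) (hh i) : ℝ))*I)
        = ∏ i, Complex.exp (2*Real.pi*(rfun (x i) (k i) (hh i))*I) := by
    intro x
    rw [← Complex.exp_sum]
    congr 1
    rw [Complex.ofReal_sum, Finset.mul_sum, Finset.sum_mul]
  simp_rw [key]
  rw [sum_prod_factor (fun i a => Complex.exp (2*Real.pi*(rfun a (k i) (hh i))*I)), Complex.norm_prod]
  exact Finset.prod_le_prod (fun i _ => norm_nonneg _)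
    (fun i _ => factor_bound (k i) (hh i))

lemma wsum : ∑ a : ZMod 2, ∑ b : ZMod 2, wfun b a = 6 := by
  rw [zmod_sum_two]
  rw [zmod_sum_two (fun b => wfun b 0), zmod_sum_two (fun b => wfun b 1)]
  norm_num [wfun]

lemma count_bound {n : ℕ} :
    ∑ hh : Fin n → ZMod 2, ∑ k : Fin n → ZMod 2, ∏ i, wfun (k i) (hh i) = 6^n := by
  have e1 : ∀ hh : Fin n → ZMod 2, ∑ k : Fin n → ZMod 2, ∏ i, wfun (k i) (hh i)
      = ∏ i, ∑ b, wfun b (hh i) := fun hh => sum_prod_factor (fun i b => wfun b (hh i))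
  simp_rw [e1]
  rw [sum_prod_factor (fun i a => ∑ b, wfun b a)]
  simp [wsum]

lemma sum_div_combine {n : ℕ} (x hh k : Fin n → ZMod 2) :
    (∑ i, ((x i + k i + hh i).val:ℝ))/8 - (∑ i, ((x i + k i).val:ℝ))/8
      - (∑ i, ((x i + hh i).val:ℝ))/8 + (∑ i, ((x i).val:ℝ))/8
      = ∑ i, rfun (x i) (k i) (hh i) := by
  simp only [rfun, sub_div, add_div, Finset.sum_add_distrib, Finset.sum_sub_distrib,
    Finset.sum_div]

theorem stmt_10 (n : ℕ)
    (P : (Fin n → ZMod 2) → AddCircle (1 : ℝ))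
    (hP : ∀ x, P x = ((((∑ i, ((x i).val : ℝ)) / 8 : ℝ)) : AddCircle (1 : ℝ)))
    (Q : (Fin n → ZMod 2) → AddCircle (1 : ℝ))
    (hQ : ∀ h₁ h₂ h₃ x, addDeriv h₃ (addDeriv h₂ (addDeriv h₁ Q)) x = 0) :
    (‖avgInner n (fun x => ee (P x)) (fun x => ee (Q x))‖) ^ 4
      ≤ (3 / 4 : ℝ) ^ n := by
  classical
  set f : (Fin n → ZMod 2) → ℂ := fun x => ee (P x) * (starRingEnd ℂ) (ee (Q x)) with hf
  set S : ℂ := ∑ x : Fin n → ZMod 2, f x with hSdef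
  -- per-(h,k) bound
  have Bbound : ∀ h k : Fin n → ZMod 2,
      ‖∑ x : Fin n → ZMod 2, f (x + k + h) * (starRingEnd ℂ) (f (x + k)) *
        ((starRingEnd ℂ) (f (x + h)) * f x)‖ ≤ ∏ i, wfun (k i) (h i) := by
    intro h k
    set c : AddCircle (1:ℝ) := Q (k + h) - Q k - Q h + Q 0 with hc
    have claim1 : ∀ x, Q (x + k + h) - Q (x + k) - Q (x + h) + Q x = c := by
      intro x
      have h0 := hQ h k x 0
      simp only [addDeriv, zero_add] at h0
      have h2 := sub_eq_zero.mp h0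
      calc Q (x + k + h) - Q (x + k) - Q (x + h) + Q x
          = Q (x + k + h) - Q (x + k) - (Q (x + h) - Q x) := by abel
        _ = Q (k + h) - Q k - (Q h - Q 0) := h2
        _ = c := by rw [hc]; abel
    have hD : ∀ x, P (x + k + h) - P (x + k) - P (x + h) + P x
        = ((∑ i, rfun (x i) (k i) (h i) : ℝ) : AddCircle (1:ℝ)) := by
      intro x
      rw [hP, hP, hP, hP, ← AddCircle.coe_sub, ← AddCircle.coe_sub, ← AddCircle.coe_add]
      congr 1
      have := sum_div_combine x h k
      simpa only [Pi.add_apply] using this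
    have prodf : ∀ x, f (x + k + h) * (starRingEnd ℂ) (f (x + k)) *
        ((starRingEnd ℂ) (f (x + h)) * f x)
        = ee ((P (x + k + h) - P (x + k) - P (x + h) + P x) - c) := by
      intro x
      rw [← claim1 x]
      simp only [hf, map_mul, Complex.conj_conj, conj_ee]
      simp only [sub_eq_add_neg, neg_add, neg_neg, ee_add]
      ring
    calc ‖∑ x : Fin n → ZMod 2, f (x + k + h) * (starRingEnd ℂ) (f (x + k)) *
          ((starRingEnd ℂ) (f (x + h)) * f x)‖
        = ‖∑ x : Fin n → ZMod 2, ee ((P (x + k + h) - P (x + k) - P (x + h) + P x)) *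
            (starRingEnd ℂ) (ee c)‖ := by
          congr 1
          exact Finset.sum_congr rfl fun x _ => by rw [prodf x, ee_sub]
      _ = ‖∑ x : Fin n → ZMod 2, ee ((P (x + k + h) - P (x + k) - P (x + h) + P x))‖
            * ‖(starRingEnd ℂ) (ee c)‖ := by
          rw [← Finset.sum_mul, norm_mul]
      _ = ‖∑ x : Fin n → ZMod 2, ee ((P (x + k + h) - P (x + k) - P (x + h) + P x))‖ := by
          rw [Complex.norm_conj, abs_ee, mul_one]
      _ = ‖∑ x : Fin n → ZMod 2,
            Complex.exp (2*Real.pi*((∑ i, rfun (x i) (k i) (h i) : ℝ))*Complex.I)‖ := by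
          congr 1
          exact Finset.sum_congr rfl fun x _ => by rw [hD x, ee_coe]
      _ ≤ ∏ i, wfun (k i) (h i) := expsum_bound h k
  -- the U² bound
  have hcard : (Fintype.card (Fin n → ZMod 2) : ℝ) = 2 ^ n := by
    simp [Fintype.card_fun]
  have hU : (‖S‖)^4 ≤ (2:ℝ)^n * (6:ℝ)^n := by
    calc (‖S‖)^4
        ≤ (Fintype.card (Fin n → ZMod 2) : ℝ) *
            ∑ h : Fin n → ZMod 2, ∑ k : Fin n → ZMod 2,
              ‖∑ x : Fin n → ZMod 2, f (x + k + h) * (starRingEnd ℂ) (f (x + k)) *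
                ((starRingEnd ℂ) (f (x + h)) * f x)‖ := u2_bound f
      _ ≤ (2:ℝ)^n * ∑ h : Fin n → ZMod 2, ∑ k : Fin n → ZMod 2, ∏ i, wfun (k i) (h i) := by
          rw [hcard]
          refine mul_le_mul_of_nonneg_left ?_ (by positivity)
          exact Finset.sum_le_sum fun h _ => Finset.sum_le_sum fun k _ => Bbound h k
      _ = (2:ℝ)^n * (6:ℝ)^n := by rw [count_bound]
  -- conclude
  have havg : avgInner n (fun x => ee (P x)) (fun x => ee (Q x)) = (1 / (2:ℂ)^n) * S := by
    rw [avgInner, hSdef]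
  rw [havg, norm_mul]
  have habs : ‖1 / (2:ℂ)^n‖ = 1 / (2:ℝ)^n := by
    simp
  rw [habs, mul_pow]
  have final : ((1:ℝ) / 2^n)^4 * ((2:ℝ)^n * 6^n) = (3/4 : ℝ)^n := by
    rw [one_div, inv_pow, ← pow_mul, ← mul_pow]
    have h16 : (2:ℝ)^(n*4) = 16^n := by
      rw [mul_comm n 4, pow_mul]; norm_num
    rw [h16, ← div_eq_inv_mul, ← div_pow]
    norm_num
  calc ((1:ℝ)/2^n)^4 * (‖S‖)^4
      ≤ ((1:ℝ)/2^n)^4 * ((2:ℝ)^n * 6^n) := by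
        refine mul_le_mul_of_nonneg_left hU (by positivity)
    _ = (3/4 : ℝ)^n := final
end

section
/- Let p be a prime, n ≥ 1, and let H₁, ..., H_r ⊆ F_p^n be affine subspaces with r ≤ n/2. Then there exist an affine subspace U ⊆ F_p^n of dimension at least n - 2r and a subset S ⊆ {1,...,r} such that for all x ∈ U: x ∈ H_i if i ∈ S and x ∉ H_i if i ∉ S. -/
open Module

private lemma step12 {K V : Type*} [Field K] [AddCommGroup V] [Module K V]
    [FiniteDimensional K V] (U H : AffineSubspace K V) (hU : (U : Set V).Nonempty) :
    ∃ U' : AffineSubspace K V, U' ≤ U ∧ (U' : Set V).Nonempty ∧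
      Module.finrank K U.direction ≤ Module.finrank K U'.direction + 1 ∧
      ((∀ x ∈ U', x ∈ H) ∨ (∀ x ∈ U', x ∉ H)) := by
  by_cases hsub : ∀ x ∈ U, x ∈ H
  · exact ⟨U, le_rfl, hU, Nat.le_succ _, Or.inl hsub⟩
  by_cases hdis : ∀ x ∈ U, x ∉ H
  · exact ⟨U, le_rfl, hU, Nat.le_succ _, Or.inr hdis⟩
  push_neg at hsub hdis
  obtain ⟨b, hbU, hbH⟩ := hsub
  obtain ⟨a, haU, haH⟩ := hdis
  set W : AffineSubspace K V := U ⊓ H with hW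
  have haW : a ∈ W := ⟨haU, haH⟩
  have hba : b - a ∉ W.direction := by
    intro h
    have hd : b - a ∈ H.direction :=
      (AffineSubspace.direction_le (inf_le_right : W ≤ H)) h
    have : b ∈ H := by
      have := AffineSubspace.vadd_mem_of_mem_direction hd haH
      simpa [vadd_eq_add, sub_add_cancel] using this
    exact hbH this
  -- find a functional vanishing on W.direction with value 1 at b - a
  have hq : (W.direction.mkQ (b - a)) ≠ 0 := by
    rwa [Submodule.mkQ_apply, Ne, Submodule.Quotient.mk_eq_zero]
  obtain ⟨g, hg⟩ : ∃ g : Module.Dual K (V ⧸ W.direction), g (W.direction.mkQ (b - a)) ≠ 0 := by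
    by_contra h
    push_neg at h
    exact hq ((Module.forall_dual_apply_eq_zero_iff K _).mp h)
  set f : V →ₗ[K] K := (g (W.direction.mkQ (b - a)))⁻¹ • (g.comp W.direction.mkQ) with hf
  have hfba : f (b - a) = 1 := by
    rw [hf]
    simp only [LinearMap.smul_apply, LinearMap.comp_apply, smul_eq_mul]
    exact inv_mul_cancel₀ hg
  have hfW : ∀ v ∈ W.direction, f v = 0 := by
    intro v hv
    have : W.direction.mkQ v = 0 := by rwa [Submodule.mkQ_apply, Submodule.Quotient.mk_eq_zero]
    simp [hf, this]
  set U' : AffineSubspace K V :=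
    U ⊓ AffineSubspace.comap f.toAffineMap (AffineSubspace.mk' (f b) ⊥) with hU'
  have hmem : ∀ x, x ∈ U' ↔ x ∈ U ∧ f x = f b := by
    intro x
    rw [hU', AffineSubspace.mem_inf_iff, AffineSubspace.mem_comap,
      AffineSubspace.mem_mk']
    simp [sub_eq_zero]
  have hbU' : b ∈ U' := (hmem b).mpr ⟨hbU, rfl⟩
  refine ⟨U', inf_le_left, ⟨b, hbU'⟩, ?_, Or.inr ?_⟩
  · -- rank bound
    set gr : U.direction →ₗ[K] K := f.comp U.direction.subtype with hgr
    have hker : (LinearMap.ker gr).map U.direction.subtype ≤ U'.direction := by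
      rintro v ⟨⟨w, hw⟩, hwk, rfl⟩
      have hfw : f w = 0 := hwk
      have hmemw : w + b ∈ U' := by
        refine (hmem _).mpr ⟨?_, by simp [map_add, hfw]⟩
        have := AffineSubspace.vadd_mem_of_mem_direction hw hbU
        simpa [vadd_eq_add] using this
      have := AffineSubspace.vsub_mem_direction hmemw hbU'
      simpa [vsub_eq_sub, add_sub_cancel_right] using this
    have h1 : finrank K (LinearMap.ker gr) ≤ finrank K U'.direction := by
      calc finrank K (LinearMap.ker gr)
          = finrank K ((LinearMap.ker gr).map U.direction.subtype) :=
            (Submodule.finrank_map_subtype_eq _ _).symm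
        _ ≤ finrank K U'.direction := Submodule.finrank_mono hker
    have h2 : finrank K (LinearMap.range gr) ≤ 1 := by
      simpa using (LinearMap.range gr).finrank_le
    have h3 : finrank K (LinearMap.range gr) + finrank K (LinearMap.ker gr)
        = finrank K U.direction := LinearMap.finrank_range_add_finrank_ker gr
    omega
  · -- disjoint from H
    intro x hx hxH
    have hxU : x ∈ U := ((hmem x).mp hx).1
    have hxb : f x = f b := ((hmem x).mp hx).2
    have hxW : x ∈ W := ⟨hxU, hxH⟩
    have : f (x - a) = 0 := hfW _ (by
      have := AffineSubspace.vsub_mem_direction hxW haW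
      simpa [vsub_eq_sub] using this)
    have hfb : f b = f a + 1 := by
      have h4 : f b - f a = 1 := by rw [← map_sub]; exact hfba
      rw [sub_eq_iff_eq_add] at h4
      rw [h4, add_comm]
    rw [map_sub, hxb, hfb] at this
    simp at this

private lemma aux12 {K V : Type*} [Field K] [AddCommGroup V] [Module K V]
    [FiniteDimensional K V] :
    ∀ (r : ℕ) (H : Fin r → AffineSubspace K V),
      ∃ (U : AffineSubspace K V) (S : Finset (Fin r)),
        (U : Set V).Nonempty ∧
        Module.finrank K V ≤ Module.finrank K U.direction + r ∧
        ∀ x ∈ U, ∀ i, (x ∈ H i ↔ i ∈ S) := by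
  intro r
  induction r with
  | zero =>
    intro H
    refine ⟨⊤, ∅, ⟨0, trivial⟩, ?_, fun x _ i => i.elim0⟩
    rw [AffineSubspace.direction_top, finrank_top]
    omega
  | succ r ih =>
    intro H
    obtain ⟨U, S, hUne, hUr, hUS⟩ := ih (fun i => H i.succ)
    obtain ⟨U', hle, hne, hrk, hcase⟩ := step12 U (H 0) hUne
    rcases hcase with hin | hout
    · refine ⟨U', insert 0 (S.map ⟨Fin.succ, Fin.succ_injective r⟩), hne, by omega, ?_⟩
      intro x hx i
      induction i using Fin.cases with
      | zero => simp [hin x hx]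
      | succ j =>
        rw [hUS x (hle hx) j]
        simp [Fin.succ_ne_zero, Fin.succ_injective r |>.eq_iff]
    · refine ⟨U', S.map ⟨Fin.succ, Fin.succ_injective r⟩, hne, by omega, ?_⟩
      intro x hx i
      induction i using Fin.cases with
      | zero => simp [hout x hx, Fin.succ_ne_zero]
      | succ j =>
        rw [hUS x (hle hx) j]
        simp [Fin.succ_injective r |>.eq_iff]

theorem stmt_12 (p : ℕ) (hp : p.Prime) (n r : ℕ) (hn : 1 ≤ n) (hr : 2 * r ≤ n)
    (H : Fin r → AffineSubspace (ZMod p) (Fin n → ZMod p))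
    (hHne : ∀ i, (H i : Set (Fin n → ZMod p)).Nonempty) :
    ∃ (U : AffineSubspace (ZMod p) (Fin n → ZMod p)) (S : Finset (Fin r)),
      (U : Set (Fin n → ZMod p)).Nonempty ∧
      n - 2 * r ≤ Module.finrank (ZMod p) U.direction ∧
      ∀ x ∈ U, ∀ i, (x ∈ H i ↔ i ∈ S) := by
  haveI := Fact.mk hp
  obtain ⟨U, S, h1, h2, h3⟩ := aux12 (K := ZMod p) (V := Fin n → ZMod p) r H
  have hfr : Module.finrank (ZMod p) (Fin n → ZMod p) = n := by
    simp [Module.finrank_pi]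
  rw [hfr] at h2
  exact ⟨U, S, h1, by omega, h3⟩
end

section
/- Let P : F_p^n → ℝ/ℤ be a nonclassical polynomial of degree d ≥ 2 with rank r = rank_d(P). Let U ⊆ F_p^n be an affine subspace of codimension k and P' the restriction of P to U (viewed in local coordinates via an affine parametrization of U). If r > pk + 1, then P' has degree exactly d and rank_d(P') ≥ r - pk. -/
open scoped BigOperators

/-- Iterated additive derivative along a list of directions. -/
def itDeriv {G M : Type*} [Add G] [Sub M] : List G → (G → M) → (G → M)
  | [], P => P
  | h :: t, P => addDeriv h (itDeriv t P)

/-- `P` is a (nonclassical) polynomial of degree at most `d`: all `(d+1)`-fold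
additive derivatives vanish. -/
def DegLE {G M : Type*} [Add G] [SubtractionMonoid M] (d : ℕ) (P : G → M) : Prop :=
  ∀ l : List G, l.length = d + 1 → ∀ x, itDeriv l P x = 0

/-- The set of sizes of decompositions `P = Γ(Q₁,…,Q_r)` with `deg Qᵢ ≤ d - 1`;
its least element is `rank_d(P)`. -/
def rankSet (p n d : ℕ) (P : (Fin n → ZMod p) → AddCircle (1 : ℝ)) : Set ℕ :=
  {r | ∃ (Q : Fin r → (Fin n → ZMod p) → AddCircle (1 : ℝ))
        (_ : ∀ i, DegLE (d - 1) (Q i))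
        (Γ : (Fin r → AddCircle (1 : ℝ)) → AddCircle (1 : ℝ)),
      ∀ x, Γ (fun i => Q i x) = P x}

section Helpers

variable {G G' M : Type*}

lemma itDeriv_append [Add G] [Sub M] (l₁ l₂ : List G) (P : G → M) :
    itDeriv (l₁ ++ l₂) P = itDeriv l₁ (itDeriv l₂ P) := by
  induction l₁ with
  | nil => rfl
  | cons h t ih =>
    show addDeriv h (itDeriv (t ++ l₂) P) = _
    rw [ih]
    rfl

lemma itDeriv_zero [Add G] [SubtractionMonoid M] (l : List G) :
    itDeriv l (fun _ => (0 : M)) = fun _ => 0 := by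
  induction l with
  | nil => rfl
  | cons h t ih =>
    funext x
    show addDeriv h (itDeriv t fun _ => (0:M)) x = 0
    rw [ih]
    simp [addDeriv]

lemma DegLE.mono [Add G] [SubtractionMonoid M] {d e : ℕ} {P : G → M}
    (h : DegLE d P) (hde : d ≤ e) : DegLE e P := by
  intro l hl x
  obtain ⟨l₁, l₂, rfl, hl₂⟩ : ∃ l₁ l₂, l = l₁ ++ l₂ ∧ l₂.length = d + 1 := by
    refine ⟨l.take (e - d), l.drop (e - d), (l.take_append_drop _).symm, ?_⟩
    rw [List.length_drop, hl]; omega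
  rw [itDeriv_append]
  have h0 : itDeriv l₂ P = fun _ => (0 : M) := funext fun y => h l₂ hl₂ y
  rw [h0, itDeriv_zero]

lemma addDeriv_comp [Add G] [Add G'] [Sub M] (P : G → M) (T S : G' → G)
    (hTS : ∀ x h, T (x + h) = T x + S h) (h : G') :
    addDeriv h (fun x => P (T x)) = fun x => addDeriv (S h) P (T x) := by
  funext x
  simp [addDeriv, hTS]

lemma itDeriv_comp [Add G] [Add G'] [Sub M] (P : G → M) (T S : G' → G)
    (hTS : ∀ x h, T (x + h) = T x + S h) (l : List G') :
    itDeriv l (fun x => P (T x)) = fun x => itDeriv (l.map S) P (T x) := by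
  induction l with
  | nil => rfl
  | cons h t ih =>
    have h1 : itDeriv (h :: t) (fun x => P (T x))
        = addDeriv h (fun x => itDeriv (t.map S) P (T x)) := by
      rw [← ih]; rfl
    rw [h1, addDeriv_comp _ T S hTS]
    rfl

lemma degLE_comp [Add G] [Add G'] [SubtractionMonoid M] {d : ℕ} {P : G → M}
    (hP : DegLE d P) (T S : G' → G) (hTS : ∀ x h, T (x + h) = T x + S h) :
    DegLE d (fun x => P (T x)) := by
  intro l hl x
  have h2 := congrFun (itDeriv_comp P T S hTS l) x
  rw [h2]
  exact hP _ (by simp [hl]) _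

lemma degLE_addDeriv [Add G] [SubtractionMonoid M] {d : ℕ} {P : G → M}
    (hP : DegLE (d + 1) P) (h : G) : DegLE d (addDeriv h P) := by
  intro l hl x
  have h1 : itDeriv l (addDeriv h P) = itDeriv (l ++ [h]) P := by
    rw [itDeriv_append]; rfl
  rw [h1]
  exact hP _ (by simp [hl]) x

lemma telescope_one [AddCommMonoid G] [AddCommGroup M] (P : G → M) (f y : G) (t : ℕ) :
    P (y + t • f) = P y + ∑ i ∈ Finset.range t, addDeriv f P (y + i • f) := by
  induction t with
  | zero => simp
  | succ t ih =>
    rw [Finset.sum_range_succ, ← add_assoc, ← ih]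
    have h1 : y + (t + 1) • f = (y + t • f) + f := by
      rw [succ_nsmul, ← add_assoc]
    rw [h1]
    simp [addDeriv]

lemma telescope_many [AddCommMonoid G] [AddCommGroup M] (P : G → M) (y : G)
    (t : ℕ → ℕ) (f : ℕ → G) (N : ℕ) :
    P (y + ∑ j ∈ Finset.range N, t j • f j) =
      P y + ∑ j ∈ Finset.range N, ∑ i ∈ Finset.range (t j),
        addDeriv (f j) P ((y + ∑ i' ∈ Finset.range j, t i' • f i') + i • f j) := by
  induction N with
  | zero => simp
  | succ N ih =>
    rw [Finset.sum_range_succ (f := fun j => t j • f j), ← add_assoc,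
      telescope_one P (f N) (y + ∑ j ∈ Finset.range N, t j • f j) (t N), ih,
      Finset.sum_range_succ, add_assoc]

lemma addCircle_coe_div_inj (p : ℕ) (hp : 0 < p) {s t : ℕ} (hs : s < p) (ht : t < p)
    (h : (((s : ℝ) / p : ℝ) : AddCircle (1 : ℝ)) = (((t : ℝ) / p : ℝ) : AddCircle (1 : ℝ))) :
    s = t := by
  obtain ⟨z, hz⟩ := QuotientAddGroup.eq.mp h
  have hz' : (z : ℝ) = -((s : ℝ) / p) + (t : ℝ) / p := by
    simpa using hz
  have hppos : (0 : ℝ) < p := by exact_mod_cast hp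
  have hp0 : (p : ℝ) ≠ 0 := ne_of_gt hppos
  have hzz : (z : ℝ) * p = (t : ℝ) - s := by
    rw [hz']
    field_simp
    ring
  have hb1 : (z : ℝ) * p < p := by
    have : (t : ℝ) < p := by exact_mod_cast ht
    have : (t : ℝ) - s < p := by
      have hs0 : (0:ℝ) ≤ s := by positivity
      linarith
    linarith [hzz]
  have hb2 : -(p : ℝ) < (z : ℝ) * p := by
    have : (s : ℝ) < p := by exact_mod_cast hs
    have ht0 : (0:ℝ) ≤ t := by positivity
    nlinarith [hzz]
  have hz1 : (z : ℝ) < 1 := by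
    by_contra hc
    push_neg at hc
    nlinarith
  have hz2 : (-1 : ℝ) < z := by
    by_contra hc
    push_neg at hc
    nlinarith
  have : z = 0 := by
    have h1 : z < 1 := by exact_mod_cast hz1
    have h2 : (-1 : ℤ) < z := by exact_mod_cast hz2
    omega
  rw [this] at hzz
  have h7 : (t : ℝ) = s := by
    have := hzz.symm
    simp at this
    linarith
  exact_mod_cast h7.symm

noncomputable def decodeQ (p : ℕ) (a : AddCircle (1 : ℝ)) : ℕ :=
  if h : ∃ t : ℕ, t < p ∧ a = (((t : ℝ) / p : ℝ) : AddCircle (1 : ℝ)) then h.choose else 0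

lemma decodeQ_spec (p : ℕ) (hp : 0 < p) (t : ℕ) (ht : t < p) :
    decodeQ p (((t : ℝ) / p : ℝ) : AddCircle (1 : ℝ)) = t := by
  have hex : ∃ s : ℕ, s < p ∧
      ((((t : ℝ) / p : ℝ) : AddCircle (1 : ℝ)) = (((s : ℝ) / p : ℝ) : AddCircle (1 : ℝ))) :=
    ⟨t, ht, rfl⟩
  rw [decodeQ, dif_pos hex]
  obtain ⟨hs1, hs2⟩ := hex.choose_spec
  exact (addCircle_coe_div_inj p hp ht hs1 hs2).symm

/-- The map `a ↦ a.val / p` from `ZMod p` to the circle is additive. -/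
lemma zmod_val_addCircle (p : ℕ) [NeZero p] (a b : ZMod p) :
    ((((a + b).val : ℝ) / p : ℝ) : AddCircle (1 : ℝ)) =
      (((a.val : ℝ) / p : ℝ) : AddCircle (1 : ℝ)) + (((b.val : ℝ) / p : ℝ) : AddCircle (1 : ℝ)) := by
  have hp : 0 < p := NeZero.pos p
  have hval : a.val + b.val = (a + b).val + p * ((a.val + b.val) / p) := by
    rw [ZMod.val_add]
    exact (Nat.mod_add_div _ _).symm
  rw [← QuotientAddGroup.mk_add]
  refine QuotientAddGroup.eq.mpr ?_
  refine ⟨((a.val + b.val) / p : ℕ), ?_⟩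
  have hppos : (0 : ℝ) < p := by exact_mod_cast hp
  have hp0 : (p : ℝ) ≠ 0 := ne_of_gt hppos
  set q : ℕ := (a.val + b.val) / p with hqdef
  have hcast : ((a.val : ℝ) + b.val) = ((a + b).val : ℝ) + p * q := by
    exact_mod_cast congrArg (fun x : ℕ => (x : ℝ)) hval
  show ((q : ℤ)) • (1 : ℝ) = _
  rw [zsmul_eq_mul, mul_one, Int.cast_natCast]
  have hr1 : -((((a + b).val : ℝ)) / p) + (((a.val : ℝ)) / p + ((b.val : ℝ)) / p)
      = (((a.val : ℝ) + b.val) - ((a + b).val : ℝ)) / p := by ring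
  rw [hr1, hcast, add_sub_cancel_left, mul_div_cancel_left₀ _ hp0]

end Helpers

section MainAux

/-- Key lemma: from any decomposition of the restriction `P'` into `r'` functions of
degree `≤ d - 1`, we get a decomposition of `P` into at most `r' + p * k` such functions. -/
lemma main_aux (p : ℕ) (hp : p.Prime) (n d k : ℕ) (hd : 2 ≤ d) (hk : k ≤ n)
    (P : (Fin n → ZMod p) → AddCircle (1 : ℝ)) (hdegLE : DegLE d P)
    (A : (Fin (n - k) → ZMod p) →ᵃ[ZMod p] (Fin n → ZMod p)) (hA : Function.Injective A)
    (P' : (Fin (n - k) → ZMod p) → AddCircle (1 : ℝ)) (hP' : ∀ y, P' y = P (A y))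
    (r' : ℕ) (Q' : Fin r' → (Fin (n - k) → ZMod p) → AddCircle (1 : ℝ))
    (hQ' : ∀ i, DegLE (d - 1) (Q' i))
    (Γ' : (Fin r' → AddCircle (1 : ℝ)) → AddCircle (1 : ℝ))
    (hΓ' : ∀ y, Γ' (fun i => Q' i y) = P' y) :
    ∃ s ∈ rankSet p n d P, s ≤ r' + p * k := by
  haveI : Fact p.Prime := ⟨hp⟩
  haveI : NeZero p := ⟨hp.ne_zero⟩
  set L := A.linear with hLdef
  -- `A u = L u + A 0`
  have hAL : ∀ u, A u = L u + A 0 := by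
    intro u
    have := A.map_vadd 0 u
    simpa [vadd_eq_add] using this
  have hLinj : Function.Injective L := by
    intro u v huv
    apply hA
    rw [hAL u, hAL v, huv]
  obtain ⟨g, hg⟩ := L.exists_leftInverse_of_injective (LinearMap.ker_eq_bot.mpr hLinj)
  have hgL : ∀ u, g (L u) = u := fun u => by
    have := LinearMap.ext_iff.mp hg u
    simpa using this
  set qlin : (Fin n → ZMod p) →ₗ[ZMod p] (Fin n → ZMod p) := LinearMap.id - L.comp g with hqdef
  have hq_apply : ∀ v, qlin v = v - L (g v) := fun v => rfl
  have hgq : ∀ v, g (qlin v) = 0 := by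
    intro v
    rw [hq_apply, map_sub, hgL]
    simp
  -- finrank computations
  have hrange_le : LinearMap.range qlin ≤ LinearMap.ker g := by
    rintro _ ⟨v, rfl⟩
    exact hgq v
  have hgsurj : LinearMap.range g = ⊤ := by
    rw [LinearMap.range_eq_top]
    intro u
    exact ⟨L u, hgL u⟩
  have hkerg : Module.finrank (ZMod p) (LinearMap.ker g) = k := by
    have h1 := LinearMap.finrank_range_add_finrank_ker g
    have h2 : Module.finrank (ZMod p) ↥(LinearMap.range g) = n - k := by
      rw [hgsurj, finrank_top, Module.finrank_pi]
      simp
    have h3 : Module.finrank (ZMod p) (Fin n → ZMod p) = n := by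
      rw [Module.finrank_pi]; simp
    rw [h2, h3] at h1
    omega
  set m := Module.finrank (ZMod p) (LinearMap.range qlin) with hmdef
  have hm : m ≤ k := by
    rw [hmdef, ← hkerg]
    exact Submodule.finrank_mono hrange_le
  set b : Module.Basis (Fin m) (ZMod p) (LinearMap.range qlin) := Module.finBasis (ZMod p) _ with hbdef
  -- the directions and the coordinates
  set f : ℕ → (Fin n → ZMod p) := fun j => if h : j < m then (b ⟨j, h⟩ : Fin n → ZMod p) else 0 with hfdef
  set cf : (Fin n → ZMod p) → ℕ → ZMod p := fun v j =>
    if h : j < m then b.repr ⟨qlin v, LinearMap.mem_range_self qlin v⟩ ⟨j, h⟩ else 0 with hcfdef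
  have hcf_add : ∀ v w j, cf (v + w) j = cf v j + cf w j := by
    intro v w j
    rcases Nat.lt_or_ge j m with h | h
    · have hsub : (⟨qlin (v + w), LinearMap.mem_range_self qlin (v + w)⟩ :
          LinearMap.range qlin) =
          ⟨qlin v, LinearMap.mem_range_self qlin v⟩ + ⟨qlin w, LinearMap.mem_range_self qlin w⟩ := by
        apply Subtype.ext
        simp [map_add]
      simp only [hcfdef, dif_pos h]
      rw [hsub, map_add, Finsupp.add_apply]
    · simp only [hcfdef, dif_neg (Nat.not_lt.mpr h), add_zero]
  have hsum : ∀ v, ∑ j ∈ Finset.range m, cf v j • f j = qlin v := by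
    intro v
    rw [← Fin.sum_univ_eq_sum_range (fun j => cf v j • f j) m]
    have hterm : ∀ j : Fin m, cf v (j : ℕ) • f (j : ℕ)
        = b.repr ⟨qlin v, LinearMap.mem_range_self qlin v⟩ j •
          ((b j : Fin n → ZMod p)) := by
      intro j
      simp only [hcfdef, hfdef, dif_pos j.isLt, Fin.eta]
    rw [Finset.sum_congr rfl (fun j _ => hterm j)]
    have := congrArg (Subtype.val) (b.sum_repr ⟨qlin v, LinearMap.mem_range_self qlin v⟩)
    simp only [Submodule.coe_sum, Submodule.coe_smul] at this
    exact this
  -- decomposition of x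
  set y0 : (Fin n → ZMod p) → (Fin n → ZMod p) := fun x => A (g (x - A 0)) with hy0def
  set tn : (Fin n → ZMod p) → ℕ → ℕ := fun x j => (cf (x - A 0) j).val with htndef
  have hvs : ∀ (a : ZMod p) (v : Fin n → ZMod p), a.val • v = a • v := by
    intro a v
    rw [← Nat.cast_smul_eq_nsmul (ZMod p), ZMod.natCast_val, ZMod.cast_id]
  have hxdec : ∀ x, x = y0 x + ∑ j ∈ Finset.range m, tn x j • f j := by
    intro x
    have h1 : ∑ j ∈ Finset.range m, tn x j • f j = qlin (x - A 0) := by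
      rw [← hsum (x - A 0)]
      exact Finset.sum_congr rfl fun j _ => hvs _ _
    rw [h1]
    show x = A (g (x - A 0)) + qlin (x - A 0)
    rw [hAL (g (x - A 0)), hq_apply]
    abel
  -- the index type
  have hp1 : 1 ≤ p := hp.one_lt.le
  -- decomposing functions
  classical
  let QI : (Fin r' ⊕ (Fin m ⊕ Fin m × Fin (p - 1))) → (Fin n → ZMod p) → AddCircle (1 : ℝ) :=
    fun idx => match idx with
    | .inl i => fun x => Q' i (g (x - A 0))
    | .inr (.inl j) => fun x => ((((cf (x - A 0) (j : ℕ)).val : ℝ) / p : ℝ) : AddCircle (1 : ℝ))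
    | .inr (.inr (j, i)) => fun x =>
        addDeriv (f (j : ℕ)) P
          ((y0 x + ∑ i' ∈ Finset.range (j : ℕ), cf (x - A 0) i' • f i') + (i : ℕ) • f (j : ℕ))
  -- degrees
  have hsub_add : ∀ (x h : Fin n → ZMod p), x + h - A 0 = (x - A 0) + h := by
    intro x h; abel
  have hdegQI : ∀ idx, DegLE (d - 1) (QI idx) := by
    rintro (i | j | ⟨j, i⟩)
    · exact degLE_comp (hQ' i) (fun x => g (x - A 0)) (fun h => g h)
        (fun x h => by
          show g (x + h - A 0) = g (x - A 0) + g h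
          rw [hsub_add, map_add])
    · -- the coordinate labels have degree ≤ 1 ≤ d - 1
      refine DegLE.mono ?_ (by omega : 1 ≤ d - 1)
      intro l hl x
      match l, hl with
      | [h₁, h₂], _ =>
        show addDeriv h₁ (addDeriv h₂ _) x = 0
        simp only [addDeriv]
        have key : ∀ u v : Fin n → ZMod p,
            QI (.inr (.inl j)) (u + v)
              = QI (.inr (.inl j)) u + (((cf v (j : ℕ)).val : ℝ) / p : ℝ) := by
          intro u v
          show ((((cf (u + v - A 0) (j:ℕ)).val : ℝ) / p : ℝ) : AddCircle (1:ℝ)) = _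
          have h1 : u + v - A 0 = (u - A 0) + v := by abel
          rw [h1, hcf_add]
          exact zmod_val_addCircle p _ _
        show QI (.inr (.inl j)) (x + h₁ + h₂) - QI (.inr (.inl j)) (x + h₁)
            - (QI (.inr (.inl j)) (x + h₂) - QI (.inr (.inl j)) x) = 0
        rw [key (x + h₁) h₂, key x h₁, key x h₂]
        abel
    · -- derivative terms
      have hder : DegLE (d - 1) (addDeriv (f (j : ℕ)) P) := by
        apply degLE_addDeriv
        have : d - 1 + 1 = d := by omega
        rw [this]
        exact hdegLE
      exact degLE_comp hder
        (fun x => (y0 x + ∑ i' ∈ Finset.range (j : ℕ), cf (x - A 0) i' • f i') + (i : ℕ) • f (j : ℕ))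
        (fun h => L (g h) + ∑ i' ∈ Finset.range (j : ℕ), cf h i' • f i')
        (by
          intro x h
          have h1 : y0 (x + h) = y0 x + L (g h) := by
            show A (g (x + h - A 0)) = A (g (x - A 0)) + L (g h)
            rw [hsub_add, map_add, hAL (g (x - A 0) + g h), hAL (g (x - A 0)), map_add]
            abel
          have h2 : ∀ i', cf (x + h - A 0) i' • f i'
              = cf (x - A 0) i' • f i' + cf h i' • f i' := by
            intro i'
            rw [hsub_add, hcf_add, add_smul]
          show (y0 (x + h) + ∑ i' ∈ Finset.range (j : ℕ), cf (x + h - A 0) i' • f i')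
                + (i : ℕ) • f (j : ℕ)
              = ((y0 x + ∑ i' ∈ Finset.range (j : ℕ), cf (x - A 0) i' • f i')
                + (i : ℕ) • f (j : ℕ))
                + (L (g h) + ∑ i' ∈ Finset.range (j : ℕ), cf h i' • f i')
          rw [h1, Finset.sum_congr rfl (fun i' _ => h2 i'), Finset.sum_add_distrib]
          abel)
  -- the combining function
  let Γtot : ((Fin r' ⊕ (Fin m ⊕ Fin m × Fin (p - 1))) → AddCircle (1 : ℝ)) → AddCircle (1 : ℝ) :=
    fun v => Γ' (fun i => v (.inl i)) +
      ∑ j : Fin m, ∑ i : Fin (p - 1),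
        if (i : ℕ) < decodeQ p (v (.inr (.inl j))) then v (.inr (.inr (j, i))) else 0
  have hmain : ∀ x, Γtot (fun idx => QI idx x) = P x := by
    intro x
    have hΓpart : Γ' (fun i => QI (.inl i) x) = P (y0 x) := by
      have := hΓ' (g (x - A 0))
      rw [hP'] at this
      exact this
    have hdec : ∀ j : Fin m, decodeQ p (QI (.inr (.inl j)) x) = tn x (j : ℕ) := by
      intro j
      exact decodeQ_spec p hp.pos _ (ZMod.val_lt _)
    have htel := telescope_many P (y0 x) (tn x) f m
    rw [← hxdec x] at htel
    rw [htel]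
    show Γ' (fun i => QI (.inl i) x) + _ = _
    rw [hΓpart]
    congr 1
    -- remains: the double sum matches
    rw [← Fin.sum_univ_eq_sum_range (fun j => ∑ i ∈ Finset.range (tn x j),
      addDeriv (f j) P ((y0 x + ∑ i' ∈ Finset.range j, tn x i' • f i') + i • f j)) m]
    apply Finset.sum_congr rfl
    intro j _
    rw [hdec j]
    have htle : tn x (j : ℕ) ≤ p - 1 := by
      show (cf (x - A 0) (j : ℕ)).val ≤ p - 1
      have := ZMod.val_lt (cf (x - A 0) (j : ℕ))
      omega
    have hpt : ∀ i : ℕ,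
        ((y0 x + ∑ i' ∈ Finset.range (j : ℕ), tn x i' • f i') + i • f (j : ℕ))
          = ((y0 x + ∑ i' ∈ Finset.range (j : ℕ), cf (x - A 0) i' • f i') + i • f (j : ℕ)) := by
      intro i
      congr 2
      exact Finset.sum_congr rfl fun i' _ => hvs _ _
    set F : ℕ → AddCircle (1 : ℝ) := fun i =>
      addDeriv (f (j : ℕ)) P
        ((y0 x + ∑ i' ∈ Finset.range (j : ℕ), cf (x - A 0) i' • f i') + i • f (j : ℕ)) with hFdef
    have hLHS : (∑ i : Fin (p - 1),
          if (i : ℕ) < tn x (j : ℕ) then QI (.inr (.inr (j, i))) x else 0)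
        = ∑ i ∈ Finset.range (p - 1), (if i < tn x (j : ℕ) then F i else 0) :=
      Fin.sum_univ_eq_sum_range (fun i => if i < tn x (j : ℕ) then F i else 0) (p - 1)
    have hRHS : (∑ i ∈ Finset.range (tn x (j : ℕ)),
          addDeriv (f (j : ℕ)) P
            ((y0 x + ∑ i' ∈ Finset.range (j : ℕ), tn x i' • f i') + i • f (j : ℕ)))
        = ∑ i ∈ Finset.range (tn x (j : ℕ)), F i :=
      Finset.sum_congr rfl fun i _ => by rw [hpt i]
    rw [hLHS, hRHS]
    rw [← Finset.sum_subset (Finset.range_subset_range.mpr htle)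
      (fun i _ hi => if_neg (by simpa using hi))]
    exact Finset.sum_congr rfl fun i hi => if_pos (Finset.mem_range.mp hi)
  -- package into rankSet
  refine ⟨Fintype.card (Fin r' ⊕ (Fin m ⊕ Fin m × Fin (p - 1))),
    ⟨fun i => QI ((Fintype.equivFin _).symm i), fun i => hdegQI _,
      fun v => Γtot (fun idx => v ((Fintype.equivFin _) idx)), fun x => ?_⟩, ?_⟩
  · have heq : (fun idx => QI ((Fintype.equivFin _).symm ((Fintype.equivFin _) idx)) x)
        = fun idx => QI idx x := by
      funext idx
      rw [Equiv.symm_apply_apply]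
    calc Γtot (fun idx => QI ((Fintype.equivFin _).symm ((Fintype.equivFin _) idx)) x)
        = Γtot (fun idx => QI idx x) := by rw [heq]
      _ = P x := hmain x
  · have hcard : Fintype.card (Fin r' ⊕ (Fin m ⊕ Fin m × Fin (p - 1)))
        = r' + (m + m * (p - 1)) := by simp
    rw [hcard]
    have h5 : m + m * (p - 1) = m * p := by
      cases p with
      | zero => omega
      | succ q => simp only [Nat.add_sub_cancel, Nat.mul_succ]; omega
    have h6 : m * p ≤ p * k := by
      rw [mul_comm]
      exact Nat.mul_le_mul_left p hm
    omega

end MainAux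

theorem stmt_16 (p : ℕ) (hp : p.Prime) (n d k r : ℕ) (hd : 2 ≤ d) (hk : k ≤ n)
    (P : (Fin n → ZMod p) → AddCircle (1 : ℝ))
    (hdegLE : DegLE d P) (hdegGT : ¬ DegLE (d - 1) P)
    (hrank : IsLeast (rankSet p n d P) r)
    -- `A` is an affine parametrization of an affine subspace `U` of codimension `k`
    (A : (Fin (n - k) → ZMod p) →ᵃ[ZMod p] (Fin n → ZMod p))
    (hA : Function.Injective A)
    (P' : (Fin (n - k) → ZMod p) → AddCircle (1 : ℝ))
    (hP' : ∀ y, P' y = P (A y))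
    (hr : p * k + 1 < r) :
    (DegLE d P' ∧ ¬ DegLE (d - 1) P') ∧
      ∀ r' ∈ rankSet p (n - k) d P', r - p * k ≤ r' := by
  have hP'eq : P' = fun y => P (A y) := funext hP'
  have hdegP' : DegLE d P' := by
    rw [hP'eq]
    exact degLE_comp hdegLE (fun y => A y) (fun h => A.linear h)
      (fun x h => by
        have := A.map_vadd x h
        rw [vadd_eq_add, vadd_eq_add] at this
        show A (x + h) = A x + A.linear h
        rw [add_comm x h, this, add_comm])
  constructor
  · refine ⟨hdegP', ?_⟩
    intro hcon
    obtain ⟨s, hs, hsle⟩ := main_aux p hp n d k hd hk P hdegLE A hA P' hP' 1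
      (fun _ => P') (fun _ => hcon) (fun v => v 0) (fun y => rfl)
    have hrs := hrank.2 hs
    omega
  · intro r' hr'
    obtain ⟨Q', hQ', Γ', hΓ'⟩ := hr'
    obtain ⟨s, hs, hsle⟩ := main_aux p hp n d k hd hk P hdegLE A hA P' hP' r' Q' hQ' Γ' hΓ'
    have hrs := hrank.2 hs
    omega
end
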